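/- Let u : ℕ → ℝ with u ∈ Λ, and let (h,β) ∈ Γ(u) be decreasing from N ∈ ℕ with S(u,h) ∩ [N,∞) ≠ ∅. Then for every j ∈ S(u,h) with j ≥ N and every m ∈ Argmax(u), one has (m : ℝ) ≤ F_u(j,h,β); in particular every maximizer of u is bounded above by F_u(j,h,β). -/
import Mathlib


open Set Filter

/-- Ω([0,1]): functions ℝ → ℝ strictly increasing and continuous on [0,1]. -/
def OmegaFun (f : ℝ → ℝ) : Prop :=
  StrictMonoOn f (Set.Icc 0 1) ∧ ContinuousOn f (Set.Icc 0 1)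

/-- (h,β) ∈ Γ(u): h k ∈ Ω([0,1]), β k ∈ (0,1) and u k ≤ h k (β k ^ k) for all k. -/
def InGamma (u : ℕ → ℝ) (h : ℕ → ℝ → ℝ) (β : ℕ → ℝ) : Prop :=
  (∀ k, OmegaFun (h k)) ∧ (∀ k, β k ∈ Set.Ioo (0:ℝ) 1) ∧ (∀ k, u k ≤ h k (β k ^ k))

/-- (h,β) is decreasing from N. -/
def DecreasingFrom (h : ℕ → ℝ → ℝ) (β : ℕ → ℝ) (N : ℕ) : Prop :=
  ∀ n, N ≤ n → (∀ x ∈ Set.Icc (0:ℝ) 1, h (n+1) x ≤ h n x) ∧ β (n+1) ≤ β n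

/-- V(u) is the supremum of u; u ∈ Λ means u is bounded above. -/
noncomputable def V (u : ℕ → ℝ) : ℝ := sSup (Set.range u)

def MemLambda (u : ℕ → ℝ) : Prop := BddAbove (Set.range u)

noncomputable def Argmax (u : ℕ → ℝ) : Set ℕ := {k | u k = V u}

lemma chain_h (h : ℕ → ℝ → ℝ) (β : ℕ → ℝ) (N : ℕ) (hdec : DecreasingFrom h β N)
    (a b : ℕ) (hNa : N ≤ a) (hab : a ≤ b) :
    (∀ x ∈ Set.Icc (0:ℝ) 1, h b x ≤ h a x) ∧ β b ≤ β a := by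
  induction b with
  | zero => simp_all
  | succ n ih =>
    rcases Nat.lt_or_ge a (n+1) with hlt | hge
    · have hn : a ≤ n := Nat.lt_succ_iff.mp hlt
      have ih' := ih hn
      have hNn : N ≤ n := le_trans hNa hn
      obtain ⟨h1, h2⟩ := hdec n hNn
      exact ⟨fun x hx => le_trans (h1 x hx) (ih'.1 x hx), le_trans h2 ih'.2⟩
    · have : a = n + 1 := le_antisymm hab hge
      subst this
      exact ⟨fun x hx => le_rfl, le_rfl⟩

/-- for a usefully decreasing pair and j ∈ S(u,h) with j ≥ N, every
maximizer m of u satisfies (m : ℝ) ≤ F_u(j,h,β). -/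
theorem maximizer_le_upper_bound_functional (u : ℕ → ℝ) (hu : MemLambda u)
    (h : ℕ → ℝ → ℝ) (β : ℕ → ℝ) (N : ℕ)
    (hΓ : InGamma u h β) (hdec : DecreasingFrom h β N)
    (husef : ∃ k : ℕ, N ≤ k ∧ h k 0 < u k)
    (j : ℕ) (hNj : N ≤ j) (hjS : h j 0 < u j)
    (xj : ℝ) (hxj : xj ∈ Set.Ioc (0:ℝ) 1) (hhxj : h j xj = u j)
    (m : ℕ) (hm : m ∈ Argmax u) :
    (m : ℝ) ≤ Real.log xj / Real.log (β j) := by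
  obtain ⟨hΩ, hβ, hub⟩ := hΓ
  obtain ⟨hβ0, hβ1⟩ := hβ j
  have hxj0 := hxj.1
  have hxjmem : xj ∈ Set.Icc (0:ℝ) 1 := ⟨le_of_lt hxj.1, hxj.2⟩
  -- β j ^ m ∈ [0,1]
  have hpowmem : ∀ k n : ℕ, β k ^ n ∈ Set.Icc (0:ℝ) 1 := fun k n =>
    ⟨pow_nonneg (le_of_lt (hβ k).1) n, pow_le_one₀ (le_of_lt (hβ k).1) (le_of_lt (hβ k).2)⟩
  -- key: xj ≤ β j ^ m
  have hkey : xj ≤ β j ^ m := by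
    have hVu : u j ≤ u m := hm ▸ le_csSup hu ⟨j, rfl⟩
    rcases le_or_gt m j with hmj | hjm
    · -- xj ≤ β j ^ j ≤ β j ^ m
      have h1 : u j ≤ h j (β j ^ j) := hub j
      have h2 : xj ≤ β j ^ j := by
        by_contra hc
        push_neg at hc
        have := (hΩ j).1 (hpowmem j j) hxjmem hc
        rw [hhxj] at this
        exact absurd h1 (not_le.mpr this)
      exact h2.trans (pow_le_pow_of_le_one (le_of_lt hβ0) (le_of_lt hβ1) hmj)
    · -- m > j ≥ N : use decreasing chain
      have hchain := chain_h h β N hdec j m hNj (le_of_lt hjm)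
      have hβm0 : (0:ℝ) < β m := (hβ m).1
      have hbm : β m ^ m ≤ β j ^ m :=
        pow_le_pow_left₀ (le_of_lt hβm0) hchain.2 m
      have h1 : u m ≤ h j (β m ^ m) :=
        le_trans (hub m) (hchain.1 _ (hpowmem m m))
      have h2 : h j (β m ^ m) ≤ h j (β j ^ m) :=
        (hΩ j).1.monotoneOn (hpowmem m m) (hpowmem j m) hbm
      have h3 : u j ≤ h j (β j ^ m) := le_trans hVu (le_trans h1 h2)
      by_contra hc
      push_neg at hc
      have := (hΩ j).1 (hpowmem j m) hxjmem hc
      rw [hhxj] at this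
      exact absurd h3 (not_le.mpr this)
  -- conclude via logs
  have hlogβ : Real.log (β j) < 0 := Real.log_neg hβ0 hβ1
  have hlog : Real.log xj ≤ (m : ℝ) * Real.log (β j) := by
    have := Real.log_le_log hxj0 hkey
    rwa [Real.log_pow] at this
  rw [le_div_iff_of_neg hlogβ]
  linarith
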